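/- Suppose f : ℝ → ℝ satisfies (f1)–(f5), let h = f⁻¹ and H(t) = ∫₀ᵗ h(s) ds. Then there exist constants C > 0 and t₀ > 0 such that H(t) − (1/2) h(t) t ≥ C t^{p/(p−1)} for all t ≥ t₀. -/

import Mathlib

set_option maxHeartbeats 1000000 in
theorem stmt_3 (f h : ℝ → ℝ) (c₀ p b₀ q : ℝ)
    (hf1 : ContDiff ℝ 1 f) (hf01 : f 0 = 0) (hf02 : deriv f 0 = 0)
    (hf2 : ∀ t : ℝ, f (-t) = - f t)
    (hc₀ : 0 < c₀) (hp : 2 < p)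
    (hf3 : Filter.Tendsto (fun t : ℝ => f t / t ^ (p - 1)) Filter.atTop (nhds c₀))
    (hb₀ : 0 < b₀) (hq2 : 2 < q) (hqp : q ≤ p)
    (hf4 : Filter.Tendsto (fun t : ℝ => f t / t ^ (q - 1))
      (nhdsWithin 0 (Set.Ioi 0)) (nhds b₀))
    (hf5 : StrictMonoOn (fun t : ℝ => f t / t) (Set.Ioi 0))
    (hhf : Function.LeftInverse h f) (hfh : Function.RightInverse h f) :
    ∃ C : ℝ, 0 < C ∧ ∃ t₀ : ℝ, 0 < t₀ ∧ ∀ t : ℝ, t₀ ≤ t →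
      C * t ^ (p / (p - 1)) ≤ (∫ s in (0:ℝ)..t, h s) - (1 / 2) * h t * t := by
  -- f is positive on (0, ∞)
  have hfpos : ∀ t : ℝ, 0 < t → 0 < f t := by
    have h1 : ∀ᶠ t in nhdsWithin (0:ℝ) (Set.Ioi 0), b₀/2 < f t / t ^ (q-1) :=
      hf4.eventually (eventually_gt_nhds (half_lt_self hb₀))
    rw [eventually_nhdsWithin_iff] at h1
    obtain ⟨δ, hδ0, hδ⟩ := Metric.eventually_nhds_iff.mp h1
    have hsmall : ∀ t : ℝ, 0 < t → t < δ → 0 < f t := by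
      intro t ht0 htδ
      have h2 : b₀ / 2 < f t / t ^ (q-1) := by
        apply hδ (by simpa [abs_of_pos ht0] using htδ) ht0
      have h3 : (0:ℝ) < t ^ (q-1) := Real.rpow_pos_of_pos ht0 _
      by_contra hc
      push_neg at hc
      have : f t / t ^ (q-1) ≤ 0 := div_nonpos_of_nonpos_of_nonneg hc h3.le
      linarith
    intro t ht0
    rcases lt_or_ge t δ with hlt | hge
    · exact hsmall t ht0 hlt
    · have ht1 : (0:ℝ) < δ/2 := by linarith
      have hfd : 0 < f (δ/2) := hsmall (δ/2) ht1 (by linarith)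
      have hlt2 : δ/2 < t := by linarith
      have := hf5 (Set.mem_Ioi.mpr ht1) (Set.mem_Ioi.mpr ht0) hlt2
      simp only at this
      have h4 : 0 < f (δ/2) / (δ/2) := div_pos hfd ht1
      have h5 : 0 < f t / t := lt_trans h4 this
      exact (div_pos_iff.mp h5).resolve_right (fun ⟨_, h⟩ => absurd ht0 (not_lt.mpr h.le)) |>.1
  -- f is strictly monotone
  have hfmonoIci : StrictMonoOn f (Set.Ici (0:ℝ)) := by
    intro u hu v hv huv
    rcases eq_or_lt_of_le (Set.mem_Ici.mp hu) with h0 | h0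
    · rw [← h0, hf01]; exact hfpos v (lt_of_le_of_lt (le_of_eq h0) huv)
    · have h1 := hf5 (Set.mem_Ioi.mpr h0) (Set.mem_Ioi.mpr (lt_trans h0 huv)) huv
      simp only at h1
      have hv0 : 0 < v := lt_trans h0 huv
      have h2 : f u * v < f v * u := (div_lt_div_iff₀ h0 hv0).mp h1
      have h3 : 0 < f v := hfpos v hv0
      nlinarith
  have hfmono : StrictMono f := by
    intro u v huv
    rcases le_or_gt 0 u with hu | hu
    · exact hfmonoIci (Set.mem_Ici.mpr hu) (Set.mem_Ici.mpr (le_trans hu huv.le)) huv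
    · rcases le_or_gt v 0 with hv | hv
      · have h1 : f (-v) < f (-u) := hfmonoIci (Set.mem_Ici.mpr (by linarith))
          (Set.mem_Ici.mpr (by linarith)) (by linarith)
        rw [hf2, hf2] at h1; linarith
      · have h1 : 0 < f (-u) := hfpos (-u) (by linarith)
        rw [hf2] at h1
        have := hfpos v hv
        linarith
  have hfsurj : Function.Surjective f := fun y => ⟨h y, hfh y⟩
  -- h is strictly monotone, continuous, h 0 = 0
  have hhmono : StrictMono h := by
    intro s t hst
    by_contra hc
    push_neg at hc
    have h1 : f (h t) ≤ f (h s) := hfmono.monotone hc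
    rw [hfh, hfh] at h1; linarith
  have hh0 : h 0 = 0 := by have := hhf 0; rwa [hf01] at this
  have hhpos : ∀ t : ℝ, 0 < t → 0 < h t := by
    intro t ht; have := hhmono ht; rwa [hh0] at this
  have hhcont : Continuous h := by
    set e := StrictMono.orderIsoOfSurjective f hfmono hfsurj with he
    have hcoe : ∀ y, h y = e.symm y := by
      intro y
      apply hfmono.injective
      rw [hfh y]
      have h2 : e (e.symm y) = y := e.apply_symm_apply y
      have h3 : e (e.symm y) = f (e.symm y) := rfl
      rw [h3] at h2
      exact h2.symm
    have : h = ⇑e.symm := funext hcoe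
    rw [this]
    exact OrderIso.continuous e.symm
  -- key ratio inequality: h s / s decreasing
  have key_ratio : ∀ s t : ℝ, 0 < s → s ≤ t → h t * s ≤ h s * t := by
    intro s t hs hst
    rcases eq_or_lt_of_le hst with heq | hlt
    · rw [heq]
    · have hs' : 0 < h s := hhpos s hs
      have ht' : 0 < h t := hhpos t (lt_trans hs hlt)
      have h1 := hf5 (Set.mem_Ioi.mpr hs') (Set.mem_Ioi.mpr ht') (hhmono hlt)
      simp only [hfh s, hfh t] at h1
      have h2 : s * h t < t * h s := (div_lt_div_iff₀ hs' ht').mp h1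
      nlinarith
  -- constants
  have hp1 : (0:ℝ) < p - 1 := by linarith
  obtain ⟨r, hr⟩ : ∃ x : ℝ, x = 1 / (p-1) := ⟨_, rfl⟩
  have hr0 : 0 < r := by rw [hr]; positivity
  obtain ⟨K, hKdef⟩ : ∃ x : ℝ, x = (2:ℝ)^(p-2) := ⟨_, rfl⟩
  have hK : (1:ℝ) < K := hKdef ▸ Real.one_lt_rpow_iff_of_pos (by norm_num) |>.mpr (Or.inl ⟨by norm_num, by linarith⟩)
  obtain ⟨ε, hε⟩ : ∃ x : ℝ, x = (K-1)/(2*(K+1)) := ⟨_, rfl⟩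
  have hε0 : 0 < ε := by rw [hε]; exact div_pos (by linarith) (by linarith)
  have hε1 : ε < 1 := by
    rw [hε, div_lt_one (by linarith)]; linarith
  have hcond : 1 + ε < K * (1 - ε) := by
    have h1 : (K+1)*ε = (K-1)/2 := by rw [hε]; field_simp
    nlinarith
  obtain ⟨aa, haadef⟩ : ∃ x : ℝ, x = (1+ε)*c₀ := ⟨_, rfl⟩
  obtain ⟨bb, hbbdef⟩ : ∃ x : ℝ, x = (1-ε)*c₀ := ⟨_, rfl⟩
  have haa : 0 < aa := by rw [haadef]; positivity
  have hbb : 0 < bb := by rw [hbbdef]; exact mul_pos (by linarith) hc₀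
  have hbc : bb < c₀ := by rw [hbbdef]; nlinarith
  have hca : c₀ < aa := by rw [haadef]; nlinarith
  obtain ⟨M₀, hM₀⟩ := Filter.eventually_atTop.mp (hf3.eventually (Ioo_mem_nhds hbc hca))
  obtain ⟨M, hM⟩ : ∃ x : ℝ, x = max M₀ 1 := ⟨_, rfl⟩
  have hM1 : (1:ℝ) ≤ M := hM ▸ le_max_right _ _
  have hM0 : (0:ℝ) < M := by linarith
  have hfb : ∀ u : ℝ, M ≤ u → bb * u ^ (p-1) < f u ∧ f u < aa * u ^ (p-1) := by
    intro u hu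
    have hu0 : 0 < u := by linarith
    have h1 := hM₀ u (le_trans (hM ▸ le_max_left M₀ 1) hu)
    have hup : (0:ℝ) < u ^ (p-1) := Real.rpow_pos_of_pos hu0 _
    exact ⟨by have := h1.1; rw [lt_div_iff₀ hup] at this; linarith,
           by have := h1.2; rw [div_lt_iff₀ hup] at this; linarith⟩
  obtain ⟨δ, hδdef⟩ : ∃ x : ℝ, x = 2 * (1/(2*aa))^r - (1/bb)^r := ⟨_, rfl⟩
  have hδpos : 0 < δ := by
    have hbase : K/aa = (2:ℝ)^(p-1) * (1/(2*aa)) := by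
      rw [hKdef, show p-1 = (p-2)+1 by ring, Real.rpow_add (by norm_num : (0:ℝ)<2),
        Real.rpow_one]
      field_simp
    have h3 : (K/aa)^r = 2 * (1/(2*aa))^r := by
      rw [hbase, Real.mul_rpow (Real.rpow_nonneg (by norm_num) _) (by positivity),
        ← Real.rpow_mul (by norm_num : (0:ℝ) ≤ 2),
        show (p-1)*r = 1 by rw [hr]; field_simp, Real.rpow_one]
    rw [hδdef, ← h3]
    have h4 : 1/bb < K/aa := by
      rw [div_lt_div_iff₀ hbb haa]
      calc 1 * aa = aa := one_mul aa
        _ < K * bb := by rw [haadef, hbbdef]; nlinarith [mul_lt_mul_of_pos_right hcond hc₀]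
    have := Real.rpow_lt_rpow (by positivity) h4 hr0
    linarith
  -- choose t₀
  have hfM : 0 < f M := hfpos M hM0
  refine ⟨δ/8, by linarith, max (2 * f M) 1, lt_of_lt_of_le one_pos (le_max_right _ _), ?_⟩
  intro t ht
  have ht1 : (1:ℝ) ≤ t := le_trans (le_max_right _ _) ht
  have ht0 : (0:ℝ) < t := by linarith
  have ht2 : (0:ℝ) < t/2 := by linarith
  have hhalf : f M ≤ t/2 := by
    have := le_trans (le_max_left _ _) ht; linarith
  have hMh2 : M ≤ h (t/2) := by
    have := hhmono.monotone hhalf; rwa [hhf] at this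
  have hMh : M ≤ h t := by
    have h1 : f M ≤ t := by linarith
    have := hhmono.monotone h1; rwa [hhf] at this
  have hht2pos : 0 < h (t/2) := by linarith
  have hhtpos : 0 < h t := by linarith
  -- bounds on h t and h (t/2)
  have hub : h t ≤ (t * (1/bb)) ^ r := by
    have h1 := (hfb (h t) hMh).1
    rw [hfh] at h1
    have h2 : (h t) ^ (p-1) ≤ t * (1/bb) := by
      rw [mul_one_div, le_div_iff₀ hbb]
      nlinarith
    have h3 := Real.rpow_le_rpow (Real.rpow_nonneg hhtpos.le _) h2 hr0.le
    rwa [← Real.rpow_mul hhtpos.le, show (p-1)*r = 1 by rw [hr]; field_simp,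
      Real.rpow_one] at h3
  have hlb : (t/2 * (1/aa)) ^ r ≤ h (t/2) := by
    have h1 := (hfb (h (t/2)) hMh2).2
    rw [hfh] at h1
    have h2 : t/2 * (1/aa) ≤ (h (t/2)) ^ (p-1) := by
      rw [mul_one_div, div_le_iff₀ haa]
      nlinarith
    have h3 := Real.rpow_le_rpow (by positivity) h2 hr0.le
    rwa [← Real.rpow_mul hht2pos.le, show (p-1)*r = 1 by rw [hr]; field_simp,
      Real.rpow_one] at h3
  have hub' : h t ≤ t^r * (1/bb)^r := by
    rwa [Real.mul_rpow ht0.le (by positivity)] at hub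
  have hlb' : t^r * (1/(2*aa))^r ≤ h (t/2) := by
    rw [show t/2 * (1/aa) = t * (1/(2*aa)) by ring] at hlb
    rwa [Real.mul_rpow ht0.le (by positivity)] at hlb
  have hdiff : δ * t ^ r ≤ 2 * h (t/2) - h t := by
    have hexp : δ * t^r = 2*(t^r * (1/(2*aa))^r) - t^r * (1/bb)^r := by
      rw [hδdef]; ring
    linarith
  -- integrals
  have hint : ∀ a b : ℝ, IntervalIntegrable h MeasureTheory.volume a b :=
    fun a b => hhcont.intervalIntegrable a b
  have hlin : ∀ (c a b : ℝ), (∫ s in a..b, c * s) = c * ((b^2 - a^2)/2) := by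
    intro c a b
    rw [intervalIntegral.integral_const_mul, integral_id]
  have I1 : h (t/2) * t / 4 ≤ ∫ s in (0:ℝ)..(t/2), h s := by
    have hptw : ∀ x ∈ Set.Icc (0:ℝ) (t/2), 2*h (t/2)/t * x ≤ h x := by
      intro x hx
      rcases eq_or_lt_of_le hx.1 with h0 | h0
      · simp only [← h0, mul_zero, hh0, le_refl]
      · have hk := key_ratio x (t/2) h0 hx.2
        rw [div_mul_eq_mul_div, div_le_iff₀ ht0]
        nlinarith
    have hmono : (∫ s in (0:ℝ)..(t/2), 2*h (t/2)/t * s) ≤ ∫ s in (0:ℝ)..(t/2), h s :=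
      intervalIntegral.integral_mono_on ht2.le
        ((continuous_const.mul continuous_id).intervalIntegrable 0 (t/2)) (hint 0 (t/2)) hptw
    rw [hlin] at hmono
    have heq : 2*h (t/2)/t * (((t/2)^2 - 0^2)/2) = h (t/2) * t / 4 := by
      field_simp; ring
    rw [heq] at hmono
    exact hmono
  have I2 : 3/8 * (h t * t) ≤ ∫ s in (t/2)..t, h s := by
    have hptw : ∀ x ∈ Set.Icc (t/2) t, h t/t * x ≤ h x := by
      intro x hx
      have hx0 : 0 < x := by have := hx.1; linarith
      have hk := key_ratio x t hx0 hx.2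
      rw [div_mul_eq_mul_div, div_le_iff₀ ht0]
      nlinarith
    have hmono : (∫ s in (t/2)..t, h t/t * s) ≤ ∫ s in (t/2)..t, h s :=
      intervalIntegral.integral_mono_on (by linarith : t/2 ≤ t)
        ((continuous_const.mul continuous_id).intervalIntegrable (t/2) t) (hint (t/2) t) hptw
    rw [hlin] at hmono
    have heq : h t/t * ((t^2 - (t/2)^2)/2) = 3/8 * (h t * t) := by
      field_simp; ring
    rw [heq] at hmono
    exact hmono
  have Hsplit : (∫ s in (0:ℝ)..(t/2), h s) + (∫ s in (t/2)..t, h s) = ∫ s in (0:ℝ)..t, h s :=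
    intervalIntegral.integral_add_adjacent_intervals (hint _ _) (hint _ _)
  have hrpow : t ^ (p/(p-1)) = t * t^r := by
    rw [show p/(p-1) = 1 + r by rw [hr]; field_simp; ring, Real.rpow_add ht0, Real.rpow_one]
  have htr : (0:ℝ) ≤ t ^ r := Real.rpow_nonneg ht0.le r
  have hkey : δ/8 * t ^ (p/(p-1)) ≤ t/8 * (2*h (t/2) - h t) := by
    rw [hrpow]
    calc δ/8 * (t * t^r) = t/8 * (δ * t^r) := by ring
      _ ≤ t/8 * (2*h (t/2) - h t) := by
          apply mul_le_mul_of_nonneg_left hdiff (by linarith)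
  have hfinal : h (t/2) * t / 4 + 3/8*(h t * t) ≤ ∫ s in (0:ℝ)..t, h s := by
    rw [← Hsplit]; linarith
  nlinarith [hkey, hfinal]
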